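/- If f is the fraction of honest nodes holding a vote m, each honest node sends out total = Θ(log³n) tokens whose walks, when good, end at each fixed core node with probability between 1/|C| - 1/n³ and (1+o(1))/|C| + 1/n³, and at least (f ± o(1))·|C|·total of the tokens carrying vote m are good, then the expected number of good tokens carrying vote m received by any fixed core node u is (f ± o(1))·total, and with high probability u receives (f ± o(1))·total good tokens carrying vote m. -/

import Mathlib

open MeasureTheory ProbabilityTheory
open scoped ENNReal


lemma aux_log_upper {d : ℝ} (h0 : 0 ≤ d) : 2*d/(2+d) ≤ Real.log (1+d) := by
  set F : ℝ → ℝ := fun x => Real.log (1+x) - 2*x/(2+x) with hF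
  have hmono : MonotoneOn F (Set.Ici 0) := by
    apply monotoneOn_of_deriv_nonneg (convex_Ici 0)
    · apply ContinuousOn.sub
      · exact (Real.continuousOn_log.comp (by fun_prop) (by
          intro x hx; simp only [Set.mem_Ici] at hx
          simp only [Set.mem_compl_iff, Set.mem_singleton_iff]; positivity))
      · exact ContinuousOn.div (by fun_prop) (by fun_prop) (by
          intro x hx; simp only [Set.mem_Ici] at hx; positivity)
    · intro x hx
      rw [interior_Ici] at hx
      simp only [Set.mem_Ioi] at hx
      have h1 : (0:ℝ) < 1 + x := by linarith
      have h2 : (0:ℝ) < 2 + x := by linarith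
      have hd : HasDerivAt F (1/(1+x) - 4/(2+x)^2) x := by
        have hlog : HasDerivAt (fun x : ℝ => Real.log (1+x)) (1/(1+x)) x := by
          simpa using ((hasDerivAt_id x).const_add 1).log h1.ne'
        have hdiv : HasDerivAt (fun x : ℝ => 2*x/(2+x)) (4/(2+x)^2) x := by
          have := ((hasDerivAt_id x).const_mul 2).div ((hasDerivAt_id x).const_add 2) h2.ne'
          refine this.congr_deriv ?_
          simp only [id]
          field_simp
          ring
        exact hlog.sub hdiv
      exact hd.differentiableAt.differentiableWithinAt
    · intro x hx
      rw [interior_Ici] at hx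
      simp only [Set.mem_Ioi] at hx
      have h1 : (0:ℝ) < 1 + x := by linarith
      have h2 : (0:ℝ) < 2 + x := by linarith
      have hd : HasDerivAt F (1/(1+x) - 4/(2+x)^2) x := by
        have hlog : HasDerivAt (fun x : ℝ => Real.log (1+x)) (1/(1+x)) x := by
          simpa using ((hasDerivAt_id x).const_add 1).log h1.ne'
        have hdiv : HasDerivAt (fun x : ℝ => 2*x/(2+x)) (4/(2+x)^2) x := by
          have := ((hasDerivAt_id x).const_mul 2).div ((hasDerivAt_id x).const_add 2) h2.ne'
          refine this.congr_deriv ?_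
          simp only [id]
          field_simp
          ring
        exact hlog.sub hdiv
      rw [hd.deriv]
      rw [sub_nonneg, div_le_div_iff₀ (by positivity) h1]
      nlinarith
  have h := hmono (Set.self_mem_Ici) (Set.mem_Ici.mpr h0) h0
  simp only [hF] at h
  norm_num at h
  linarith

lemma aux_log_lower {d : ℝ} (h0 : 0 ≤ d) (h1 : d < 1) :
    -d + d^2/2 ≤ (1-d)*Real.log (1-d) := by
  rcases eq_or_lt_of_le h0 with h|h0
  · simp [← h]
  set G : ℝ → ℝ := fun x => (1-x)*Real.log (1-x) + (x - x^2/2) with hG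
  have key : ∀ x ∈ Set.Icc (0:ℝ) d, ∀ hx1 : x < 1, HasDerivAt G (-Real.log (1-x) - x) x := by
    intro x hx hx1
    have hpos : (0:ℝ) < 1 - x := by linarith
    have hd1 : HasDerivAt (fun x : ℝ => (1-x)*Real.log (1-x)) (-Real.log (1-x) - 1) x := by
      have hf : HasDerivAt (fun x : ℝ => 1 - x) (-1) x := by
        simpa using (hasDerivAt_id x).const_sub 1
      have := hf.mul (hf.log hpos.ne')
      refine this.congr_deriv ?_
      field_simp
      ring
    have hd2 : HasDerivAt (fun x : ℝ => x - x^2/2) (1 - x) x := by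
      have := (hasDerivAt_id x).sub ((hasDerivAt_pow 2 x).div_const 2)
      refine this.congr_deriv ?_
      ring
    have := hd1.add hd2
    refine this.congr_deriv ?_
    ring
  have hmono : MonotoneOn G (Set.Icc 0 d) := by
    apply monotoneOn_of_deriv_nonneg (convex_Icc 0 d)
    · intro x hx
      exact (key x hx (lt_of_le_of_lt hx.2 h1)).continuousAt.continuousWithinAt
    · intro x hx
      rw [interior_Icc] at hx
      exact (key x (Set.mem_Icc.mpr ⟨hx.1.le, hx.2.le⟩) (lt_of_lt_of_le hx.2 h1.le)).differentiableAt.differentiableWithinAt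
    · intro x hx
      rw [interior_Icc] at hx
      have hx1 : x < 1 := lt_of_lt_of_le hx.2 h1.le
      rw [(key x (Set.mem_Icc.mpr ⟨hx.1.le, hx.2.le⟩) hx1).deriv]
      have : Real.log (1-x) ≤ (1-x) - 1 := Real.log_le_sub_one_of_pos (by linarith)
      linarith
  have h := hmono (Set.left_mem_Icc.mpr h0.le) (Set.right_mem_Icc.mpr h0.le) h0.le
  simp only [hG] at h
  norm_num at h
  linarith

lemma bernoulli_chernoff {Ω : Type*} [MeasureSpace Ω] [IsProbabilityMeasure (ℙ : Measure Ω)]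
    {N : ℕ} (p : Fin N → ℝ) (hp0 : ∀ j, 0 ≤ p j) (hp1 : ∀ j, p j ≤ 1)
    (s : Fin N → Set Ω) (hmeas : ∀ j, MeasurableSet (s j))
    (hindep : iIndepSet s ℙ)
    (hdist : ∀ j, ℙ (s j) = ENNReal.ofReal (p j))
    {δ : ℝ} (hδ0 : 0 < δ) (hδ1 : δ ≤ 1) :
    ℙ {ω | δ * (∑ j, p j) ≤ |(∑ j, (s j).indicator (fun _ => (1:ℝ)) ω) - ∑ j, p j|}
      ≤ ENNReal.ofReal (2 * Real.exp (-(∑ j, p j) * δ^2 / 3)) := by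
  classical
  set X : Fin N → Ω → ℝ := fun j => (s j).indicator (fun _ => (1:ℝ)) with hX
  set μR : ℝ := ∑ j, p j with hμR
  have hμ0 : 0 ≤ μR := Finset.sum_nonneg fun j _ => hp0 j
  have hXmeas : ∀ j, Measurable (X j) := fun j => measurable_const.indicator (hmeas j)
  set S : Ω → ℝ := fun ω => ∑ j, X j ω with hS
  have hSmeas : Measurable S := Finset.measurable_sum _ fun j _ => hXmeas j
  have hXbd : ∀ j ω, 0 ≤ X j ω ∧ X j ω ≤ 1 := by
    intro j ω
    simp only [hX, Set.indicator_apply]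
    split_ifs <;> norm_num
  have hSbd : ∀ ω, 0 ≤ S ω ∧ S ω ≤ N := by
    intro ω
    constructor
    · exact Finset.sum_nonneg fun j _ => (hXbd j ω).1
    · calc S ω ≤ ∑ _j : Fin N, (1:ℝ) := Finset.sum_le_sum fun j _ => (hXbd j ω).2
        _ = N := by simp
  have hint : ∀ t : ℝ, Integrable (fun ω => Real.exp (t * S ω)) ℙ := by
    intro t
    apply Integrable.mono' (integrable_const (Real.exp (|t| * N)))
      ((hSmeas.const_mul t).exp.aestronglyMeasurable)
    filter_upwards with ω
    rw [Real.norm_eq_abs, Real.abs_exp, Real.exp_le_exp]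
    calc t * S ω ≤ |t * S ω| := le_abs_self _
      _ = |t| * |S ω| := abs_mul _ _
      _ ≤ |t| * N := by
          apply mul_le_mul_of_nonneg_left _ (abs_nonneg t)
          rw [abs_of_nonneg (hSbd ω).1]; exact (hSbd ω).2
  have hmgfj : ∀ (j : Fin N) (t : ℝ), mgf (X j) ℙ t = 1 + p j * (Real.exp t - 1) := by
    intro j t
    have heq : (fun ω => Real.exp (t * X j ω))
        = fun ω => (s j).indicator (fun _ => Real.exp t - 1) ω + 1 := by
      funext ω
      by_cases h : ω ∈ s j <;>
        simp [hX, Set.indicator_of_mem, Set.indicator_of_notMem, h]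
    rw [mgf, heq, integral_add ((integrable_const _).indicator (hmeas j)) (integrable_const 1),
      integral_indicator_const _ (hmeas j), integral_const]
    simp [measureReal_def, hdist j, ENNReal.toReal_ofReal (hp0 j)]
    ring
  have hiid : iIndepFun X ℙ := hindep.iIndepFun_indicator
  have hmgfS : ∀ t : ℝ, mgf S ℙ t ≤ Real.exp (μR * (Real.exp t - 1)) := by
    intro t
    have hsum : S = ∑ j, X j := by
      funext ω; rw [hS]; simp [Finset.sum_apply]
    rw [hsum, hiid.mgf_sum hXmeas]
    calc ∏ j, mgf (X j) ℙ t ≤ ∏ j : Fin N, Real.exp (p j * (Real.exp t - 1)) := by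
          apply Finset.prod_le_prod
          · intro j _
            rw [hmgfj j t]
            nlinarith [Real.exp_pos t, hp0 j, hp1 j]
          · intro j _
            rw [hmgfj j t]
            have := Real.add_one_le_exp (p j * (Real.exp t - 1))
            linarith
      _ = Real.exp (∑ j, p j * (Real.exp t - 1)) := (Real.exp_sum _ _).symm
      _ = Real.exp (μR * (Real.exp t - 1)) := by rw [← Finset.sum_mul]
  -- upper tail
  have hup : (ℙ {ω | (1+δ)*μR ≤ S ω}).toReal ≤ Real.exp (-μR * δ^2 / 3) := by
    set t := Real.log (1+δ) with ht
    have ht0 : 0 ≤ t := Real.log_nonneg (by linarith)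
    have het : Real.exp t = 1 + δ := Real.exp_log (by linarith)
    calc (ℙ {ω | (1+δ)*μR ≤ S ω}).toReal
        ≤ Real.exp (-t * ((1+δ)*μR)) * mgf S ℙ t :=
          measure_ge_le_exp_mul_mgf _ ht0 (hint t)
      _ ≤ Real.exp (-t * ((1+δ)*μR)) * Real.exp (μR * (Real.exp t - 1)) := by
          exact mul_le_mul_of_nonneg_left (hmgfS t) (Real.exp_pos _).le
      _ = Real.exp (μR * (δ - (1+δ)*t)) := by
          rw [← Real.exp_add, het]; ring_nf
      _ ≤ Real.exp (-μR * δ^2 / 3) := by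
          rw [Real.exp_le_exp]
          have hlog := aux_log_upper hδ0.le
          rw [div_le_iff₀ (by linarith : (0:ℝ) < 2 + δ)] at hlog
          have key : δ - (1+δ)*t ≤ -δ^2/3 := by nlinarith
          nlinarith [mul_le_mul_of_nonneg_left key hμ0]
  -- lower tail
  have hlo : (ℙ {ω | S ω ≤ (1-δ)*μR}).toReal ≤ Real.exp (-μR * δ^2 / 3) := by
    by_cases hδlt : δ < 1
    · set t := Real.log (1-δ) with ht
      have hpos : (0:ℝ) < 1 - δ := by linarith
      have ht0 : t ≤ 0 := Real.log_nonpos (by linarith) (by linarith)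
      have het : Real.exp t = 1 - δ := Real.exp_log hpos
      calc (ℙ {ω | S ω ≤ (1-δ)*μR}).toReal
          ≤ Real.exp (-t * ((1-δ)*μR)) * mgf S ℙ t :=
            measure_le_le_exp_mul_mgf _ ht0 (hint t)
        _ ≤ Real.exp (-t * ((1-δ)*μR)) * Real.exp (μR * (Real.exp t - 1)) :=
            mul_le_mul_of_nonneg_left (hmgfS t) (Real.exp_pos _).le
        _ = Real.exp (μR * (-δ - (1-δ)*t)) := by
            rw [← Real.exp_add, het]; ring_nf
        _ ≤ Real.exp (-μR * δ^2 / 3) := by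
            rw [Real.exp_le_exp]
            have hlog := aux_log_lower hδ0.le hδlt
            have key : -δ - (1-δ)*t ≤ -δ^2/3 := by nlinarith
            nlinarith [mul_le_mul_of_nonneg_left key hμ0]
    · have hδ1' : δ = 1 := le_antisymm hδ1 (not_lt.mp hδlt)
      subst hδ1'
      calc (ℙ {ω | S ω ≤ (1-1)*μR}).toReal
          ≤ Real.exp (-(-2) * ((1-1)*μR)) * mgf S ℙ (-2) :=
            measure_le_le_exp_mul_mgf _ (by norm_num) (hint (-2))
        _ ≤ Real.exp (μR * (Real.exp (-2) - 1)) := by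
            have := hmgfS (-2)
            simpa using this
        _ ≤ Real.exp (-μR * 1^2 / 3) := by
            rw [Real.exp_le_exp]
            have h3 : (3:ℝ) ≤ Real.exp 2 := by
              have := Real.add_one_le_exp (2:ℝ); linarith
            have he : Real.exp (-2) ≤ 1/3 := by
              rw [Real.exp_neg, ← one_div]
              exact one_div_le_one_div_of_le (by norm_num) h3
            nlinarith
  -- combine
  have hsub : {ω | δ * μR ≤ |S ω - μR|}
      ⊆ {ω | (1+δ)*μR ≤ S ω} ∪ {ω | S ω ≤ (1-δ)*μR} := by
    intro ω h
    simp only [Set.mem_setOf_eq] at h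
    rcases le_abs.mp h with h'|h'
    · left; simp only [Set.mem_setOf_eq]; linarith
    · right; simp only [Set.mem_setOf_eq]; linarith
  calc ℙ {ω | δ * μR ≤ |S ω - μR|}
      ≤ ℙ ({ω | (1+δ)*μR ≤ S ω} ∪ {ω | S ω ≤ (1-δ)*μR}) := measure_mono hsub
    _ ≤ ℙ {ω | (1+δ)*μR ≤ S ω} + ℙ {ω | S ω ≤ (1-δ)*μR} := measure_union_le _ _
    _ ≤ ENNReal.ofReal (Real.exp (-μR * δ^2 / 3)) + ENNReal.ofReal (Real.exp (-μR * δ^2 / 3)) := by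
        gcongr
        · exact (ENNReal.le_ofReal_iff_toReal_le (measure_ne_top _ _) (Real.exp_pos _).le).mpr hup
        · exact (ENNReal.le_ofReal_iff_toReal_le (measure_ne_top _ _) (Real.exp_pos _).le).mpr hlo
    _ = ENNReal.ofReal (2 * Real.exp (-μR * δ^2 / 3)) := by
        rw [← ENNReal.ofReal_add (Real.exp_pos _).le (Real.exp_pos _).le]
        ring_nf

/- **Statement 14.** If `f` is the fraction of honest nodes holding vote `m`, at least
`(f ± ε)·|C|·total` good tokens carry vote `m` (`total = Θ(log³ n)`), and each good
token's walk ends at the fixed core node `u` with probability between `1/|C| - 1/n³`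
and `(1+ε)/|C| + 1/n³`, then the expected number of good tokens with vote `m` received
by `u` is `(f ± o(1))·total` (with explicit error `εout = 3ε + 2|C|/n³`), and by a
multiplicative Chernoff bound, with high probability `u` receives `(f ± o(1))·total`
good tokens carrying vote `m`. -/
open Classical in
theorem stmt_14 {Ω : Type*} [MeasureSpace Ω] [IsProbabilityMeasure (ℙ : Measure Ω)]
    (n : ℕ) (hn : 0 < n)
    (Cc T f ε : ℝ) (hCc : 0 < Cc) (hCcn : Cc ≤ n) (hT : 1 ≤ T)
    (hf0 : 0 ≤ f) (hf1 : f ≤ 1) (hε0 : 0 ≤ ε) (hε1 : ε ≤ 1)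
    (N : ℕ) (hNlb : (f - ε) * Cc * T ≤ N) (hNub : (N : ℝ) ≤ (f + ε) * Cc * T)
    (p : Fin N → ℝ)
    (hp : ∀ j, 1 / Cc - 1 / (n : ℝ) ^ 3 ≤ p j ∧ p j ≤ (1 + ε) / Cc + 1 / (n : ℝ) ^ 3)
    (ξ : Fin N → Ω → Prop) (hmeas : ∀ j, MeasurableSet {ω | ξ j ω})
    (hindep : iIndepSet (fun j => {ω | ξ j ω}) ℙ)
    (hdist : ∀ j, ℙ {ω | ξ j ω} = ENNReal.ofReal (p j))
    (εout : ℝ) (hεout : εout = 3 * ε + 2 * Cc / (n : ℝ) ^ 3) :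
    ((f - εout) * T ≤ ∫ ω, ((Finset.univ.filter (fun j => ξ j ω)).card : ℝ)) ∧
    ((∫ ω, ((Finset.univ.filter (fun j => ξ j ω)).card : ℝ)) ≤ (f + εout) * T) ∧
    (∀ δ' : ℝ, 0 < δ' → δ' ≤ 1 →
      ℙ {ω | δ' * (∫ ω', ((Finset.univ.filter (fun j => ξ j ω')).card : ℝ)) ≤
            |((Finset.univ.filter (fun j => ξ j ω)).card : ℝ) -
              ∫ ω', ((Finset.univ.filter (fun j => ξ j ω')).card : ℝ)|} ≤
        ENNReal.ofReal (2 * Real.exp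
          (-(∫ ω', ((Finset.univ.filter (fun j => ξ j ω')).card : ℝ)) * δ' ^ 2 / 3))) := by
  have hn1 : (1:ℝ) ≤ (n:ℝ) := by exact_mod_cast hn
  have hn3 : (0:ℝ) < (n:ℝ)^3 := by positivity
  have hCcn3 : Cc ≤ (n:ℝ)^3 := by
    have h2 : (n:ℝ) ≤ (n:ℝ)^2 := by nlinarith
    have h3 : (n:ℝ)^2 ≤ (n:ℝ)^3 := by nlinarith
    linarith
  have hT0 : (0:ℝ) ≤ T := by linarith
  have hN0 : (0:ℝ) ≤ (N:ℝ) := Nat.cast_nonneg N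
  have hp0 : ∀ j, 0 ≤ p j := by
    intro j
    have h1 : 1/(n:ℝ)^3 ≤ 1/Cc := one_div_le_one_div_of_le hCc hCcn3
    linarith [(hp j).1]
  have hp1 : ∀ j, p j ≤ 1 := by
    intro j
    have h := prob_le_one (μ := (ℙ : Measure Ω)) (s := {ω | ξ j ω})
    rw [hdist j] at h
    exact ENNReal.ofReal_le_one.mp h
  set μR : ℝ := ∑ j, p j with hμR
  have card_eq : ∀ ω, ((Finset.univ.filter (fun j => ξ j ω)).card : ℝ)
      = ∑ j, ({ω' | ξ j ω'}).indicator (fun _ => (1:ℝ)) ω := by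
    intro ω
    rw [Finset.card_filter]
    push_cast
    refine Finset.sum_congr rfl fun j _ => ?_
    by_cases h : ξ j ω <;> simp [Set.indicator_apply, h]
  have integral_eq : (∫ ω, ((Finset.univ.filter (fun j => ξ j ω)).card : ℝ)) = μR := by
    simp only [card_eq]
    rw [integral_finset_sum _ (fun j _ => (integrable_const (1:ℝ)).indicator (hmeas j))]
    refine Finset.sum_congr rfl fun j _ => ?_
    rw [integral_indicator_const _ (hmeas j), measureReal_def, hdist j]
    simp [ENNReal.toReal_ofReal (hp0 j)]
  -- bounds on μR
  have hμlb : (N:ℝ)*(1/Cc - 1/(n:ℝ)^3) ≤ μR := by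
    rw [hμR]
    calc (N:ℝ)*(1/Cc - 1/(n:ℝ)^3) = ∑ _j : Fin N, (1/Cc - 1/(n:ℝ)^3) := by
          rw [Finset.sum_const, Finset.card_univ, Fintype.card_fin, nsmul_eq_mul]
      _ ≤ ∑ j, p j := Finset.sum_le_sum fun j _ => (hp j).1
  have hμub : μR ≤ (N:ℝ)*((1+ε)/Cc + 1/(n:ℝ)^3) := by
    rw [hμR]
    calc ∑ j, p j ≤ ∑ _j : Fin N, ((1+ε)/Cc + 1/(n:ℝ)^3) :=
          Finset.sum_le_sum fun j _ => (hp j).2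
      _ = (N:ℝ)*((1+ε)/Cc + 1/(n:ℝ)^3) := by
          rw [Finset.sum_const, Finset.card_univ, Fintype.card_fin, nsmul_eq_mul]
  have hB : (f-ε)*T ≤ (N:ℝ)/Cc := by
    rw [le_div_iff₀ hCc]
    calc (f-ε)*T*Cc = (f-ε)*Cc*T := by ring
      _ ≤ N := hNlb
  have hB' : (N:ℝ)/Cc ≤ (f+ε)*T := by
    rw [div_le_iff₀ hCc]
    calc (N:ℝ) ≤ (f+ε)*Cc*T := hNub
      _ = (f+ε)*T*Cc := by ring
  have hD : (N:ℝ)/(n:ℝ)^3 ≤ 2*Cc*T/(n:ℝ)^3 := by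
    gcongr
    nlinarith [mul_nonneg hCc.le hT0]
  have hlow : (f - εout) * T ≤ μR := by
    have e1 : (N:ℝ)*(1/Cc - 1/(n:ℝ)^3) = (N:ℝ)/Cc - (N:ℝ)/(n:ℝ)^3 := by ring
    have e2 : (f - εout)*T = (f-ε)*T - 2*(ε*T) - 2*Cc*T/(n:ℝ)^3 := by rw [hεout]; ring
    have e3 : (0:ℝ) ≤ ε*T := mul_nonneg hε0 hT0
    linarith
  have hhigh : μR ≤ (f + εout) * T := by
    have e1 : (N:ℝ)*((1+ε)/Cc + 1/(n:ℝ)^3) = (1+ε)*((N:ℝ)/Cc) + (N:ℝ)/(n:ℝ)^3 := by ring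
    have e2 : (1+ε)*((N:ℝ)/Cc) ≤ (1+ε)*((f+ε)*T) :=
      mul_le_mul_of_nonneg_left hB' (by linarith)
    have e3 : (1+ε)*((f+ε)*T) ≤ (f+3*ε)*T := by nlinarith
    have e4 : (f + εout)*T = (f+3*ε)*T + 2*Cc*T/(n:ℝ)^3 := by rw [hεout]; ring
    linarith
  refine ⟨by rw [integral_eq]; exact hlow, by rw [integral_eq]; exact hhigh, ?_⟩
  intro δ' hδ'0 hδ'1
  have hseteq : {ω | δ' * (∫ ω', ((Finset.univ.filter (fun j => ξ j ω')).card : ℝ)) ≤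
        |((Finset.univ.filter (fun j => ξ j ω)).card : ℝ) -
          ∫ ω', ((Finset.univ.filter (fun j => ξ j ω')).card : ℝ)|}
      = {ω | δ' * μR ≤ |(∑ j, ({ω' | ξ j ω'}).indicator (fun _ => (1:ℝ)) ω) - μR|} := by
    ext ω
    rw [Set.mem_setOf_eq, Set.mem_setOf_eq, integral_eq, card_eq]
  rw [hseteq, integral_eq]
  exact bernoulli_chernoff p hp0 hp1 _ hmeas hindep hdist hδ'0 hδ'1
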